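/- Let n₀, n₁, n₂ ∈ ℝ³ with ‖n_i‖ ≤ 1, and let M⁰, M¹, M² be the corresponding unbiased binary qubit POVMs with effects M^i_z = (1/2)(I + (−1)^z n_i·σ), z ∈ {0,1}. Then the following are equivalent: (1) for every permutation (i,j,k) of (0,1,2) and every q ∈ [0,1], the binary qubit POVMs M^i and (q M^j_z + (1−q) M^k_z)_{z∈{0,1}} are not jointly measurable; (2) for every permutation (i,j,k) of (0,1,2) and every q ∈ [0,1], ‖n_i + q n_j + (1−q) n_k‖ + ‖n_i − q n_j − (1−q) n_k‖ > 2. -/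

import Mathlib

open Matrix Finset
open scoped ComplexOrder

noncomputable section

/-- A `d`-outcome POVM on `ℂ^n`: positive semidefinite effects summing to the identity. -/
def IsPOVM {n d : ℕ} (M : Fin d → Matrix (Fin n) (Fin n) ℂ) : Prop :=
  (∀ z, (M z).PosSemidef) ∧ ∑ z, M z = 1

/-- Coarse-graining of a `d`-outcome POVM along `f : Fin d → Fin k`. -/
def coarseGrain {n d k : ℕ} (M : Fin d → Matrix (Fin n) (Fin n) ℂ) (f : Fin d → Fin k)
    (z' : Fin k) : Matrix (Fin n) (Fin n) ℂ :=
  ∑ z ∈ Finset.univ.filter (fun z => f z = z'), M z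

/-- Compatibility of a finite family of `d`-outcome POVMs: existence of a parent POVM
`G` together with classical post-processings `p`. -/
def Compatible {n m d : ℕ} (M : Fin m → Fin d → Matrix (Fin n) (Fin n) ℂ) : Prop :=
  ∃ (L : ℕ) (G : Fin L → Matrix (Fin n) (Fin n) ℂ) (p : Fin m → Fin d → Fin L → ℝ),
    (∀ l, (G l).PosSemidef) ∧ (∑ l, G l = 1) ∧
    (∀ x z l, 0 ≤ p x z l) ∧ (∀ x l, ∑ z, p x z l = 1) ∧
    (∀ x z, M x z = ∑ l, (p x z l : ℂ) • G l)

/-- Joint measurability of two POVMs via a joint parent POVM with marginals `A` and `B`. -/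
def JointlyMeasurable {n a b : ℕ} (A : Fin a → Matrix (Fin n) (Fin n) ℂ)
    (B : Fin b → Matrix (Fin n) (Fin n) ℂ) : Prop :=
  ∃ G : Fin a → Fin b → Matrix (Fin n) (Fin n) ℂ,
    (∀ i j, (G i j).PosSemidef) ∧ (∑ i, ∑ j, G i j = 1) ∧
    (∀ i, A i = ∑ j, G i j) ∧ (∀ j, B j = ∑ i, G i j)

/-- The Pauli matrix `σ_x`. -/
def σx : Matrix (Fin 2) (Fin 2) ℂ := !![0, 1; 1, 0]

/-- The Pauli matrix `σ_y`. -/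
def σy : Matrix (Fin 2) (Fin 2) ℂ := !![0, -Complex.I; Complex.I, 0]

/-- The Pauli matrix `σ_z`. -/
def σz : Matrix (Fin 2) (Fin 2) ℂ := !![1, 0; 0, -1]

/-- The unbiased binary qubit POVM with Bloch vector `v`: effects `(1/2)(I + (−1)^z v·σ)`. -/
def bloch (v : EuclideanSpace ℝ (Fin 3)) (z : Fin 2) : Matrix (Fin 2) (Fin 2) ℂ :=
  (1/2 : ℂ) • (1 + ((-1 : ℂ)) ^ (z : ℕ) •
    ((v 0 : ℂ) • σx + (v 1 : ℂ) • σy + (v 2 : ℂ) • σz))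

namespace BuschAux

def hmat (p x y r : ℝ) : Matrix (Fin 2) (Fin 2) ℂ :=
  !![(p:ℂ), (x:ℂ) + (y:ℂ)*Complex.I; (x:ℂ) - (y:ℂ)*Complex.I, (r:ℂ)]
lemma hmat_add (p x y r p' x' y' r' : ℝ) :
    hmat p x y r + hmat p' x' y' r' = hmat (p+p') (x+x') (y+y') (r+r') := by
  unfold hmat; ext i j
  fin_cases i <;> fin_cases j <;> simp <;> push_cast <;> ring
lemma hmat_smul (c p x y r : ℝ) :
    (c:ℂ) • hmat p x y r = hmat (c*p) (c*x) (c*y) (c*r) := by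
  unfold hmat; ext i j
  fin_cases i <;> fin_cases j <;> simp <;> push_cast <;> ring
lemma hmat_congr {p x y r p' x' y' r' : ℝ} (h1 : p = p') (h2 : x = x') (h3 : y = y')
    (h4 : r = r') : hmat p x y r = hmat p' x' y' r' := by rw [h1, h2, h3, h4]
lemma hmat_inj {p x y r p' x' y' r' : ℝ} (h : hmat p x y r = hmat p' x' y' r') :
    p = p' ∧ x = x' ∧ y = y' ∧ r = r' := by
  have h00 := congrFun (congrFun h 0) 0
  have h01 := congrFun (congrFun h 0) 1
  have h11 := congrFun (congrFun h 1) 1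
  simp [hmat, Complex.ext_iff] at h00 h01 h11
  exact ⟨h00, h01.1, h01.2, h11⟩
lemma hmat_one : (1 : Matrix (Fin 2) (Fin 2) ℂ) = hmat 1 0 0 1 := by
  ext i j; fin_cases i <;> fin_cases j <;> simp [hmat, Matrix.one_apply]
lemma bloch_apply0 (v : EuclideanSpace ℝ (Fin 3)) :
    bloch v 0 = hmat ((1 + v 2)/2) (v 0/2) (-(v 1)/2) ((1 - v 2)/2) := by
  unfold bloch hmat σx σy σz; ext i j
  fin_cases i <;> fin_cases j <;> simp [Matrix.one_apply] <;> push_cast <;> ring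
lemma bloch_apply1 (v : EuclideanSpace ℝ (Fin 3)) :
    bloch v 1 = hmat ((1 - v 2)/2) (-(v 0)/2) ((v 1)/2) ((1 + v 2)/2) := by
  unfold bloch hmat σx σy σz; ext i j
  fin_cases i <;> fin_cases j <;> simp [Matrix.one_apply] <;> push_cast <;> ring
lemma quadform_nonneg (p r x y A B C D : ℝ) (hp : 0 ≤ p) (hr : 0 ≤ r)
    (h : x^2 + y^2 ≤ p*r) :
    0 ≤ p*(A^2+B^2) + r*(C^2+D^2) + 2*x*(A*C+B*D) + 2*y*(A*D-B*C) := by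
  have hX : 0 ≤ p*(A^2+B^2) + r*(C^2+D^2) := by positivity
  have h4 : 4*(x*(A*C+B*D) + y*(A*D-B*C))^2 ≤ (p*(A^2+B^2) + r*(C^2+D^2))^2 := by
    nlinarith [sq_nonneg (p*(A^2+B^2) - r*(C^2+D^2)), sq_nonneg (x*(A*D-B*C) - y*(A*C+B*D)),
      mul_le_mul_of_nonneg_right h (mul_nonneg (by positivity : (0:ℝ) ≤ A^2+B^2)
        (by positivity : (0:ℝ) ≤ C^2+D^2))]
  nlinarith [h4, hX]
lemma psd2 (p x y r : ℝ) (hp : 0 ≤ p) (hr : 0 ≤ r) (h : x^2 + y^2 ≤ p*r) :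
    (hmat p x y r).PosSemidef := by
  refine Matrix.PosSemidef.of_dotProduct_mulVec_nonneg ?_ ?_
  · ext i j
    fin_cases i <;> fin_cases j <;>
      simp [hmat, Matrix.conjTranspose_apply, Complex.ext_iff]
  · intro v
    have hv : star v ⬝ᵥ (hmat p x y r).mulVec v
        = (starRingEnd ℂ) (v 0) * ((p:ℂ) * v 0 + ((x:ℂ) + (y:ℂ)*Complex.I) * v 1)
          + (starRingEnd ℂ) (v 1) * (((x:ℂ) - (y:ℂ)*Complex.I) * v 0 + (r:ℂ) * v 1) := by
      simp [hmat, dotProduct, Matrix.mulVec, Fin.sum_univ_two, mul_comm]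
    rw [hv]
    set u0 := v 0; set u1 := v 1
    rw [Complex.le_def]
    constructor
    · simp only [Complex.add_re, Complex.mul_re, Complex.mul_im, Complex.add_im,
        Complex.sub_re, Complex.sub_im, Complex.ofReal_re, Complex.ofReal_im,
        Complex.I_re, Complex.I_im, Complex.conj_re, Complex.conj_im, Complex.zero_re]
      nlinarith [quadform_nonneg p r x y u0.re u0.im u1.re u1.im hp hr h,
        quadform_nonneg p r x (-y) u0.re u0.im u1.re u1.im hp hr (by nlinarith),
        quadform_nonneg p r (-x) y u0.re u0.im u1.re u1.im hp hr (by nlinarith),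
        quadform_nonneg p r (-x) (-y) u0.re u0.im u1.re u1.im hp hr (by nlinarith)]
    · simp only [Complex.add_im, Complex.mul_re, Complex.mul_im, Complex.add_re,
        Complex.sub_re, Complex.sub_im, Complex.ofReal_re, Complex.ofReal_im,
        Complex.I_re, Complex.I_im, Complex.conj_re, Complex.conj_im, Complex.zero_im]
      ring
lemma psd2_facts (M : Matrix (Fin 2) (Fin 2) ℂ) (h : M.PosSemidef) :
    0 ≤ (M 0 0).re ∧ 0 ≤ (M 1 1).re ∧
      (M 0 1).re^2 + (M 0 1).im^2 ≤ (M 0 0).re * (M 1 1).re ∧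
      M = hmat (M 0 0).re (M 0 1).re (M 0 1).im (M 1 1).re := by
  have herm := h.1
  have h10 : M 1 0 = (starRingEnd ℂ) (M 0 1) := by
    have := congrFun (congrFun herm 1) 0
    simpa [Matrix.conjTranspose_apply] using this.symm
  have hd0 : (0:ℂ) ≤ M 0 0 := by
    have := h.dotProduct_mulVec_nonneg (Pi.single 0 1)
    simpa [dotProduct, Matrix.mulVec, Fin.sum_univ_two, Pi.single_apply] using this
  have hd1 : (0:ℂ) ≤ M 1 1 := by
    have := h.dotProduct_mulVec_nonneg (Pi.single 1 1)
    simpa [dotProduct, Matrix.mulVec, Fin.sum_univ_two, Pi.single_apply] using this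
  have hdet : (0:ℂ) ≤ M.det := by
    rw [herm.det_eq_prod_eigenvalues, Fin.prod_univ_two]
    exact mul_nonneg (RCLike.ofReal_nonneg.2 (h.eigenvalues_nonneg 0))
      (RCLike.ofReal_nonneg.2 (h.eigenvalues_nonneg 1))
  rw [Matrix.det_fin_two, h10] at hdet
  rw [Complex.le_def] at hd0 hd1 hdet
  simp only [Complex.zero_re, Complex.zero_im] at hd0 hd1 hdet
  have him0 : (M 0 0).im = 0 := hd0.2.symm
  have him1 : (M 1 1).im = 0 := hd1.2.symm
  refine ⟨hd0.1, hd1.1, ?_, ?_⟩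
  · have hre := hdet.1
    simp only [Complex.sub_re, Complex.mul_re, Complex.conj_re, Complex.conj_im,
      him0, him1] at hre
    nlinarith [hre]
  · ext i j
    fin_cases i <;> fin_cases j <;>
      simp [hmat, Complex.ext_iff, him0, him1, h10, Complex.conj_re, Complex.conj_im]
lemma norm3_sq (v : EuclideanSpace ℝ (Fin 3)) : ‖v‖^2 = v 0^2 + v 1^2 + v 2^2 := by
  rw [EuclideanSpace.norm_eq, Real.sq_sqrt (by positivity)]
  simp [Fin.sum_univ_three, Real.norm_eq_abs, sq_abs]
lemma norm3_le (v : EuclideanSpace ℝ (Fin 3)) (t : ℝ) (ht : 0 ≤ t)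
    (h : v 0^2 + v 1^2 + v 2^2 ≤ t^2) : ‖v‖ ≤ t := by
  nlinarith [norm3_sq v, norm_nonneg v]
lemma norm3_sq_le (v : EuclideanSpace ℝ (Fin 3)) (t : ℝ) (h : ‖v‖ ≤ t) :
    v 0^2 + v 1^2 + v 2^2 ≤ t^2 := by
  nlinarith [norm3_sq v, norm_nonneg v]
lemma dot_bound (t0 x0 y0 z0 t1 x1 y1 z1 : ℝ)
    (h0 : x0^2+y0^2+z0^2 ≤ t0^2) (h1 : x1^2+y1^2+z1^2 ≤ t1^2)
    (ht0 : 0 ≤ t0) (ht1 : 0 ≤ t1) :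
    (x0-x1)^2+(y0-y1)^2+(z0-z1)^2 ≤ (t0+t1)^2 := by
  have key : 0 ≤ t0*t1 + (x0*x1+y0*y1+z0*z1) := by
    nlinarith [sq_nonneg (x0*y1 - x1*y0), sq_nonneg (x0*z1 - x1*z0), sq_nonneg (y0*z1 - y1*z0),
      mul_le_mul h0 h1 (by positivity) (by positivity), mul_nonneg ht0 ht1]
  nlinarith [key, h0, h1]

lemma mvec_bound (p x y r : ℝ) (h : x^2+y^2 ≤ p*r) :
    (2*x)^2 + (-2*y)^2 + (p-r)^2 ≤ (p+r)^2 := by nlinarith [h]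

set_option maxHeartbeats 1600000 in
lemma busch_fwd (a b : EuclideanSpace ℝ (Fin 3)) :
    JointlyMeasurable (bloch a) (bloch b) → ‖a + b‖ + ‖a - b‖ ≤ 2 := by
  rintro ⟨G, hpsd, -, hA, hB⟩
  obtain ⟨hp00, hr00, hq00, hrep00⟩ := psd2_facts _ (hpsd 0 0)
  obtain ⟨hp01, hr01, hq01, hrep01⟩ := psd2_facts _ (hpsd 0 1)
  obtain ⟨hp10, hr10, hq10, hrep10⟩ := psd2_facts _ (hpsd 1 0)
  obtain ⟨hp11, hr11, hq11, hrep11⟩ := psd2_facts _ (hpsd 1 1)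
  have hA0 := hA 0
  rw [Fin.sum_univ_two, hrep00, hrep01, hmat_add, bloch_apply0 a] at hA0
  obtain ⟨a1, a2, a3, a4⟩ := hmat_inj hA0
  have hA1 := hA 1
  rw [Fin.sum_univ_two, hrep10, hrep11, hmat_add, bloch_apply1 a] at hA1
  obtain ⟨a5, a6, a7, a8⟩ := hmat_inj hA1
  have hB0 := hB 0
  rw [Fin.sum_univ_two, hrep00, hrep10, hmat_add, bloch_apply0 b] at hB0
  obtain ⟨b1, b2, b3, b4⟩ := hmat_inj hB0
  have hB1 := hB 1
  rw [Fin.sum_univ_two, hrep01, hrep11, hmat_add, bloch_apply1 b] at hB1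
  obtain ⟨b5, b6, b7, b8⟩ := hmat_inj hB1
  clear hA hB hA0 hA1 hB0 hB1 hrep00 hrep01 hrep10 hrep11 hpsd
  have H00 := mvec_bound _ _ _ _ hq00
  have H01 := mvec_bound _ _ _ _ hq01
  have H10 := mvec_bound _ _ _ _ hq10
  have H11 := mvec_bound _ _ _ _ hq11
  have K1 := dot_bound _ _ _ _ _ _ _ _ H00 H11
    (by linarith only [hp00, hr00]) (by linarith only [hp11, hr11])
  have K2 := dot_bound _ _ _ _ _ _ _ _ H01 H10
    (by linarith only [hp01, hr01]) (by linarith only [hp10, hr10])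
  have N1 : ‖a + b‖ ≤ ((G 0 0 0 0).re + (G 0 0 1 1).re) + ((G 1 1 0 0).re + (G 1 1 1 1).re) := by
    apply norm3_le _ _ (by linarith only [hp00, hr00, hp11, hr11])
    have c0 : (a + b) 0 = 2*(G 0 0 0 1).re - 2*(G 1 1 0 1).re := by
      rw [PiLp.add_apply]; linarith only [a2, a6, b2, b6]
    have c1 : (a + b) 1 = -2*(G 0 0 0 1).im - -2*(G 1 1 0 1).im := by
      rw [PiLp.add_apply]; linarith only [a3, a7, b3, b7]
    have c2 : (a + b) 2 = ((G 0 0 0 0).re - (G 0 0 1 1).re)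
        - ((G 1 1 0 0).re - (G 1 1 1 1).re) := by
      rw [PiLp.add_apply]; linarith only [a1, a4, a5, a8, b1, b4, b5, b8]
    rw [c0, c1, c2]; exact K1
  have N2 : ‖a - b‖ ≤ ((G 0 1 0 0).re + (G 0 1 1 1).re) + ((G 1 0 0 0).re + (G 1 0 1 1).re) := by
    apply norm3_le _ _ (by linarith only [hp01, hr01, hp10, hr10])
    have c0 : (a - b) 0 = 2*(G 0 1 0 1).re - 2*(G 1 0 0 1).re := by
      rw [PiLp.sub_apply]; linarith only [a2, a6, b2, b6]
    have c1 : (a - b) 1 = -2*(G 0 1 0 1).im - -2*(G 1 0 0 1).im := by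
      rw [PiLp.sub_apply]; linarith only [a3, a7, b3, b7]
    have c2 : (a - b) 2 = ((G 0 1 0 0).re - (G 0 1 1 1).re)
        - ((G 1 0 0 0).re - (G 1 0 1 1).re) := by
      rw [PiLp.sub_apply]; linarith only [a1, a4, a5, a8, b1, b4, b5, b8]
    rw [c0, c1, c2]; exact K2
  linarith only [N1, N2, a1, a4, a5, a8]

set_option maxHeartbeats 1600000 in
lemma busch_bwd (a b : EuclideanSpace ℝ (Fin 3)) (hle : ‖a + b‖ + ‖a - b‖ ≤ 2) :
    JointlyMeasurable (bloch a) (bloch b) := by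
  obtain ⟨γ, hγ1⟩ : ∃ g : ℝ, ‖a + b‖ = 1 + g := ⟨‖a + b‖ - 1, by ring⟩
  have hγ2 : ‖a - b‖ ≤ 1 - γ := by linarith
  have h1 : (a 0 + b 0)^2 + (a 1 + b 1)^2 + (a 2 + b 2)^2 ≤ (1+γ)^2 := by
    have := norm3_sq_le (a + b) (1+γ) (le_of_eq hγ1)
    simpa [PiLp.add_apply] using this
  have h2 : (a 0 - b 0)^2 + (a 1 - b 1)^2 + (a 2 - b 2)^2 ≤ (1-γ)^2 := by
    have := norm3_sq_le (a - b) (1-γ) hγ2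
    simpa [PiLp.sub_apply] using this
  have hγlo : 0 ≤ 1 + γ := hγ1 ▸ norm_nonneg _
  have hγhi : 0 ≤ 1 - γ := le_trans (norm_nonneg _) hγ2
  clear hγ1 hγ2 hle
  refine ⟨fun i j => hmat
    ((1 + (-1:ℝ)^((i:ℕ)+(j:ℕ))*γ + ((-1:ℝ)^(i:ℕ) * a 2 + (-1:ℝ)^(j:ℕ) * b 2))/4)
    (((-1:ℝ)^(i:ℕ) * a 0 + (-1:ℝ)^(j:ℕ) * b 0)/4)
    (-((-1:ℝ)^(i:ℕ) * a 1 + (-1:ℝ)^(j:ℕ) * b 1)/4)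
    ((1 + (-1:ℝ)^((i:ℕ)+(j:ℕ))*γ - ((-1:ℝ)^(i:ℕ) * a 2 + (-1:ℝ)^(j:ℕ) * b 2))/4),
    ?_, ?_, ?_, ?_⟩
  · intro i j
    fin_cases i <;> fin_cases j <;>
      (apply psd2 <;> · norm_num
                        nlinarith only [h1, h2, hγlo, hγhi])
  · simp only [Fin.sum_univ_two, hmat_add, Fin.isValue, Fin.val_zero, Fin.val_one]
    rw [hmat_one]
    apply hmat_congr <;> (norm_num; try ring)
  · intro z
    fin_cases z <;>
      simp only [Fin.sum_univ_two, hmat_add, Fin.isValue, Fin.val_zero, Fin.val_one,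
        Fin.zero_eta, Fin.mk_one]
    · rw [bloch_apply0]; apply hmat_congr <;> (norm_num; try ring)
    · rw [bloch_apply1]; apply hmat_congr <;> (norm_num; try ring)
  · intro z
    fin_cases z <;>
      simp only [Fin.sum_univ_two, hmat_add, Fin.isValue, Fin.val_zero, Fin.val_one,
        Fin.zero_eta, Fin.mk_one]
    · rw [bloch_apply0]; apply hmat_congr <;> (norm_num; try ring)
    · rw [bloch_apply1]; apply hmat_congr <;> (norm_num; try ring)

lemma busch (a b : EuclideanSpace ℝ (Fin 3)) :
    JointlyMeasurable (bloch a) (bloch b) ↔ ‖a + b‖ + ‖a - b‖ ≤ 2 :=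
  ⟨busch_fwd a b, busch_bwd a b⟩

lemma bloch_mix (q : ℝ) (v w : EuclideanSpace ℝ (Fin 3)) (z : Fin 2) :
    (q:ℂ) • bloch v z + ((1-q:ℝ):ℂ) • bloch w z = bloch (q • v + (1-q) • w) z := by
  fin_cases z <;> simp only [Fin.zero_eta, Fin.mk_one]
  · rw [bloch_apply0 v, bloch_apply0 w, bloch_apply0, hmat_smul, hmat_smul, hmat_add]
    apply hmat_congr <;> (simp [PiLp.add_apply, PiLp.smul_apply, smul_eq_mul]; try ring)
  · rw [bloch_apply1 v, bloch_apply1 w, bloch_apply1, hmat_smul, hmat_smul, hmat_add]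
    apply hmat_congr <;> (simp [PiLp.add_apply, PiLp.smul_apply, smul_eq_mul]; try ring)

end BuschAux

/-- Busch-type criterion: the three unbiased qubit measurements are fully incompatible w.r.t.
disjoint-convex-mixing iff `‖n_i + q n_j + (1−q) n_k‖ + ‖n_i − q n_j − (1−q) n_k‖ > 2` for all
permutations `(i,j,k)` of `(0,1,2)` and all `q ∈ [0,1]`. -/
theorem fully_incompatible_convex_mixing_iff_busch
    (n : Fin 3 → EuclideanSpace ℝ (Fin 3)) (hn : ∀ i, ‖n i‖ ≤ 1) :
    (∀ i j k : Fin 3, i ≠ j → j ≠ k → i ≠ k → ∀ q ∈ Set.Icc (0 : ℝ) 1,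
      ¬ JointlyMeasurable (bloch (n i))
        (fun z => (q : ℂ) • bloch (n j) z + ((1 - q : ℝ) : ℂ) • bloch (n k) z)) ↔
    (∀ i j k : Fin 3, i ≠ j → j ≠ k → i ≠ k → ∀ q ∈ Set.Icc (0 : ℝ) 1,
      ‖n i + q • n j + (1 - q) • n k‖ + ‖n i - q • n j - (1 - q) • n k‖ > 2) := by
  have key : ∀ c d : EuclideanSpace ℝ (Fin 3),
      ¬ JointlyMeasurable (bloch c) (bloch d) ↔ 2 < ‖c + d‖ + ‖c - d‖ := by
    intro c d; rw [BuschAux.busch]; exact not_le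
  constructor
  · intro H i j k hij hjk hik q hq
    have h := H i j k hij hjk hik q hq
    rw [show (fun z => (q:ℂ) • bloch (n j) z + ((1 - q : ℝ):ℂ) • bloch (n k) z)
        = bloch (q • n j + (1 - q) • n k) from
        funext fun z => BuschAux.bloch_mix q (n j) (n k) z] at h
    rw [gt_iff_lt, add_assoc, sub_sub]
    exact (key _ _).1 h
  · intro H i j k hij hjk hik q hq
    have h := H i j k hij hjk hik q hq
    rw [show (fun z => (q:ℂ) • bloch (n j) z + ((1 - q : ℝ):ℂ) • bloch (n k) z)
        = bloch (q • n j + (1 - q) • n k) from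
        funext fun z => BuschAux.bloch_mix q (n j) (n k) z]
    rw [gt_iff_lt, add_assoc, sub_sub] at h
    exact (key _ _).2 h
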